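/- Let n be a positive integer and let A be a positive definite n×n real matrix. Then for every positive definite n×n real matrix Ω, tr(Ω⁻¹ A) + log det Ω ≥ n + log det A, with equality if and only if Ω = A. In particular, Ω = A is the unique minimizer over positive definite matrices of the function Ω ↦ tr(Ω⁻¹ A) + log det Ω. -/

import Mathlib

open Matrix

/-- Conjugation of a positive definite matrix by an invertible matrix. -/
lemma posDefConj {n : ℕ} {A B : Matrix (Fin n) (Fin n) ℝ} (hA : A.PosDef)
    (hB : IsUnit B.det) : (Bᴴ * A * B).PosDef := by
  exact hA.conjTranspose_mul_mul_same
    (Matrix.mulVec_injective_iff_isUnit.2 ((Matrix.isUnit_iff_isUnit_det B).2 hB))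

/-- Key scalar-style lemma:  for posdef `C`, `tr C ≥ n + log det C`, equality iff `C = 1`. -/
lemma traceKey {n : ℕ} {C : Matrix (Fin n) (Fin n) ℝ} (hC : C.PosDef) :
    (n : ℝ) + Real.log C.det ≤ C.trace ∧
      (C.trace = (n : ℝ) + Real.log C.det ↔ C = 1) := by
  classical
  set lam := hC.1.eigenvalues with hlam
  have hpos : ∀ i, 0 < lam i := hC.eigenvalues_pos
  have htr : C.trace = ∑ i, lam i := by
    nth_rewrite 1 [hC.1.spectral_theorem]
    rw [Unitary.conjStarAlgAut_apply, Matrix.trace_mul_cycle]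
    rw [show (star (hC.1.eigenvectorUnitary : Matrix (Fin n) (Fin n) ℝ)) *
        (hC.1.eigenvectorUnitary : Matrix (Fin n) (Fin n) ℝ) = 1 from
      Matrix.UnitaryGroup.star_mul_self _]
    simp [Matrix.trace_diagonal, Function.comp]
    rfl
  have hdet : Real.log C.det = ∑ i, Real.log (lam i) := by
    rw [hC.1.det_eq_prod_eigenvalues, Real.log_prod]
    · rfl
    · exact fun i _ => (hpos i).ne'
  have hpt : ∀ i, 1 + Real.log (lam i) ≤ lam i := by
    intro i
    have := Real.add_one_le_exp (Real.log (lam i))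
    rw [Real.exp_log (hpos i)] at this
    linarith
  have hsum : (n : ℝ) + Real.log C.det = ∑ i, (1 + Real.log (lam i)) := by
    rw [hdet, Finset.sum_add_distrib]
    simp
  constructor
  · rw [htr, hsum]
    exact Finset.sum_le_sum fun i _ => hpt i
  constructor
  · intro h
    have hz : ∑ i, (lam i - (1 + Real.log (lam i))) = 0 := by
      rw [Finset.sum_sub_distrib, ← htr, ← hsum, h, sub_self]
    have hall : ∀ i ∈ Finset.univ, lam i - (1 + Real.log (lam i)) = 0 :=
      (Finset.sum_eq_zero_iff_of_nonneg (fun i _ => by linarith [hpt i])).1 hz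
    have hone : ∀ i, lam i = 1 := by
      intro i
      by_contra hne
      have hlog : Real.log (lam i) ≠ 0 := by
        intro h0
        rcases Real.log_eq_zero.1 h0 with h | h | h
        · exact (hpos i).ne' h
        · exact hne h
        · linarith [hpos i]
      have := Real.add_one_lt_exp hlog
      rw [Real.exp_log (hpos i)] at this
      have := hall i (Finset.mem_univ i)
      linarith
    rw [hC.1.spectral_theorem]
    have hfun : (RCLike.ofReal ∘ lam : Fin n → ℝ) = fun _ => 1 := funext fun i => by simp [hone i]
    have hdiag : Matrix.diagonal (RCLike.ofReal ∘ lam) = (1 : Matrix (Fin n) (Fin n) ℝ) := by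
      rw [hfun, ← Matrix.diagonal_one]
    rw [hdiag, Unitary.conjStarAlgAut_apply, mul_one, (Matrix.mem_unitaryGroup_iff).mp (hC.1.eigenvectorUnitary).2]
  · rintro rfl
    simp

theorem stmt8 (n : ℕ) (hn : 0 < n)
    (A : Matrix (Fin n) (Fin n) ℝ) (hA : A.PosDef) :
    ∀ Om : Matrix (Fin n) (Fin n) ℝ, Om.PosDef →
      ((Om⁻¹ * A).trace + Real.log Om.det ≥ (n : ℝ) + Real.log A.det ∧
        ((Om⁻¹ * A).trace + Real.log Om.det = (n : ℝ) + Real.log A.det ↔ Om = A)) := by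
  intro Om hOm
  classical
  set S := (open scoped MatrixOrder in CFC.sqrt Om) with hSdef
  have hS : S.PosSemidef := by open scoped MatrixOrder in exact (CFC.sqrt_nonneg Om).posSemidef
  have hSH : S.IsHermitian := hS.1
  have hSS : S * S = Om := by
    open scoped MatrixOrder in exact CFC.sqrt_mul_sqrt_self Om hOm.posSemidef.nonneg
  have hdetOm : 0 < Om.det := hOm.det_pos
  have hdetS2 : S.det * S.det = Om.det := by rw [← det_mul, hSS]
  have hdetSne : S.det ≠ 0 := by
    intro h
    rw [h, mul_zero] at hdetS2
    exact hdetOm.ne' hdetS2.symm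
  have hhSu2 : IsUnit S.det := isUnit_iff_ne_zero.2 hdetSne
  have hinvH : (S⁻¹)ᴴ = S⁻¹ := by rw [conjTranspose_nonsing_inv, hSH.eq]
  have hdetSinv : IsUnit (S⁻¹).det := by
    rw [det_nonsing_inv]
    exact isUnit_iff_ne_zero.2 (by simpa using hdetSne)
  have hC : (S⁻¹ * A * S⁻¹).PosDef := by
    have := posDefConj hA hdetSinv
    rwa [hinvH] at this
  set C := S⁻¹ * A * S⁻¹ with hCdef
  have hOminv : Om⁻¹ = S⁻¹ * S⁻¹ := by rw [← hSS, Matrix.mul_inv_rev]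
  have htrace : (Om⁻¹ * A).trace = C.trace := by
    rw [hOminv, mul_assoc, Matrix.trace_mul_comm, hCdef, mul_assoc]
  have hSinvS : S⁻¹ * S = 1 := nonsing_inv_mul S hhSu2
  have hSSinv : S * S⁻¹ = 1 := mul_nonsing_inv S hhSu2
  have hdetC : C.det = A.det / Om.det := by
    rw [hCdef, det_mul, det_mul, det_nonsing_inv, ← hdetS2]
    rw [Ring.inverse_eq_inv']
    field_simp
  have hlogC : Real.log C.det = Real.log A.det - Real.log Om.det := by
    rw [hdetC, Real.log_div hA.det_pos.ne' hdetOm.ne']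
  obtain ⟨hineq, heq⟩ := traceKey hC
  have hAeq : S * C * S = A := by
    rw [hCdef]
    simp only [Matrix.mul_assoc, hSinvS, Matrix.mul_one]
    rw [← Matrix.mul_assoc, hSSinv, Matrix.one_mul]
  have hCA : C = 1 ↔ Om = A := by
    constructor
    · intro h
      rw [← hSS, ← hAeq, h, Matrix.mul_one]
    · intro h
      rw [hCdef, ← h, ← hSS]
      simp only [Matrix.mul_assoc, hSSinv, Matrix.mul_one, hSinvS]
  constructor
  · rw [htrace]
    rw [hlogC] at hineq
    linarith
  · rw [htrace, ← hCA, ← heq, hlogC]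
    constructor <;> intro h <;> linarith
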